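/- If v ∈ ℝ² is an unbalanced vertex whose imbalance vector has norm strictly between 0 and 2, then there exist at least two (in fact uncountably many) pairs of distinct angles (α₁, α₂, α₃) such that adding three unit vectors making angles αᵢ with −Imb(v) balances the vertex; i.e., the system cos α₁ + cos α₂ + cos α₃ = imb(v) and sin α₁ + sin α₂ + sin α₃ = 0 has uncountably many solutions. -/

import Mathlib

noncomputable section BalAux

namespace BalAux

open Real

def V2 (x y : ℝ) : EuclideanSpace ℝ (Fin 2) := (WithLp.equiv 2 (Fin 2 → ℝ)).symm ![x, y]

lemma V2_zero (x y : ℝ) : V2 x y 0 = x := rfl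
lemma V2_one (x y : ℝ) : V2 x y 1 = y := rfl

lemma norm_V2 (x y : ℝ) (h : x^2 + y^2 = 1) : ‖V2 x y‖ = 1 := by
  rw [EuclideanSpace.norm_eq, Fin.sum_univ_two]
  show Real.sqrt (‖x‖^2 + ‖y‖^2) = 1
  rw [Real.norm_eq_abs, Real.norm_eq_abs, sq_abs, sq_abs, h, Real.sqrt_one]

lemma scalar_key (c0 c1 r t : ℝ) (hr : r ≠ 0) (hc : c0^2 + c1^2 = r^2)
    (ht : t^2 = 1 - r^2/4) :
    (c0/2 - t*c1/r)^2 + (c1/2 + t*c0/r)^2 = 1 := by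
  field_simp
  nlinarith [hc, ht, sq_nonneg r]

lemma scalar_key' (c0 c1 r t : ℝ) (hr : r ≠ 0) (hc : c0^2 + c1^2 = r^2)
    (ht : t^2 = 1 - r^2/4) :
    (c0/2 + t*c1/r)^2 + (c1/2 - t*c0/r)^2 = 1 := by
  have h := scalar_key c0 (-c1) r t hr (by nlinarith) ht
  linear_combination h

/-- coordinates of `c = -b - w₃ θ` -/
def C0 (b0 b1 β θ : ℝ) : ℝ := (Real.cos θ * b0 + Real.sin θ * b1)/β - b0
def C1 (b0 b1 β θ : ℝ) : ℝ := (Real.cos θ * b1 - Real.sin θ * b0)/β - b1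
def Rr (β θ : ℝ) : ℝ := Real.sqrt (β^2 + 1 - 2*β*Real.cos θ)
def Tt (β θ : ℝ) : ℝ := Real.sqrt (1 - (β^2 + 1 - 2*β*Real.cos θ)/4)

/-- the balancing triple parametrized by the angle θ of the third vector -/
def trip (b0 b1 β θ : ℝ) : EuclideanSpace ℝ (Fin 2) × EuclideanSpace ℝ (Fin 2) ×
    EuclideanSpace ℝ (Fin 2) :=
  (V2 (C0 b0 b1 β θ/2 - Tt β θ * C1 b0 b1 β θ / Rr β θ)
      (C1 b0 b1 β θ/2 + Tt β θ * C0 b0 b1 β θ / Rr β θ),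
   V2 (C0 b0 b1 β θ/2 + Tt β θ * C1 b0 b1 β θ / Rr β θ)
      (C1 b0 b1 β θ/2 - Tt β θ * C0 b0 b1 β θ / Rr β θ),
   V2 ((-(Real.cos θ) * b0 - Real.sin θ * b1)/β) ((-(Real.cos θ) * b1 + Real.sin θ * b0)/β))

end BalAux

end BalAux

open BalAux in
theorem uncountably_many_balancing_triples (b : EuclideanSpace ℝ (Fin 2))
    (h0 : 0 < ‖b‖) (h2 : ‖b‖ < 2) :
    ¬ Set.Countable {p : EuclideanSpace ℝ (Fin 2) × EuclideanSpace ℝ (Fin 2) ×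
        EuclideanSpace ℝ (Fin 2) |
      ‖p.1‖ = 1 ∧ ‖p.2.1‖ = 1 ∧ ‖p.2.2‖ = 1 ∧ p.1 + p.2.1 + p.2.2 = -b} := by
  intro hS
  have hb2 : (b 0)^2 + (b 1)^2 = ‖b‖^2 := by
    have h := EuclideanSpace.norm_eq b
    rw [Fin.sum_univ_two] at h
    have hnn : (0:ℝ) ≤ ‖b 0‖^2 + ‖b 1‖^2 := by positivity
    have h2 := Real.sq_sqrt hnn
    rw [← h] at h2
    simp only [Real.norm_eq_abs, sq_abs] at h2
    linarith
  set b0 := b 0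
  set b1 := b 1
  set β := ‖b‖ with hβdef
  have hβ0 : β ≠ 0 := ne_of_gt h0
  have key : ∀ θ ∈ Set.Ioc (0:ℝ) 1,
      0 < β^2 + 1 - 2*β*Real.cos θ ∧ β^2 + 1 - 2*β*Real.cos θ < 4 := by
    rintro θ ⟨hθ0, hθ1⟩
    have hsinpos : 0 < Real.sin θ :=
      Real.sin_pos_of_pos_of_lt_pi hθ0 (by nlinarith [Real.pi_gt_three])
    have hcoslb : (1:ℝ)/2 ≤ Real.cos θ := by
      have := Real.one_sub_sq_div_two_le_cos (x := θ)
      nlinarith [sq_nonneg θ]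
    constructor
    · nlinarith [sq_nonneg (β - Real.cos θ), Real.sin_sq_add_cos_sq θ, hsinpos]
    · nlinarith [h0, h2]
  have hmaps : Set.MapsTo (trip b0 b1 β) (Set.Ioc 0 1)
      {p : EuclideanSpace ℝ (Fin 2) × EuclideanSpace ℝ (Fin 2) ×
        EuclideanSpace ℝ (Fin 2) |
      ‖p.1‖ = 1 ∧ ‖p.2.1‖ = 1 ∧ ‖p.2.2‖ = 1 ∧ p.1 + p.2.1 + p.2.2 = -b} := by
    intro θ hθ
    obtain ⟨hpos, hlt⟩ := key θ hθ
    have hRpos : 0 < Rr β θ := Real.sqrt_pos.mpr hpos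
    have hRne : Rr β θ ≠ 0 := ne_of_gt hRpos
    have hR2 : (Rr β θ)^2 = β^2 + 1 - 2*β*Real.cos θ := Real.sq_sqrt (le_of_lt hpos)
    have hT2 : (Tt β θ)^2 = 1 - (Rr β θ)^2/4 := by
      rw [hR2]; exact Real.sq_sqrt (by linarith)
    have hc : (C0 b0 b1 β θ)^2 + (C1 b0 b1 β θ)^2 = (Rr β θ)^2 := by
      rw [hR2, C0, C1]
      field_simp
      nlinarith [Real.sin_sq_add_cos_sq θ, hb2]
    refine ⟨?_, ?_, ?_, ?_⟩
    · exact norm_V2 _ _ (scalar_key _ _ _ _ hRne hc hT2)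
    · exact norm_V2 _ _ (scalar_key' _ _ _ _ hRne hc hT2)
    · apply norm_V2
      field_simp
      nlinarith [Real.sin_sq_add_cos_sq θ, hb2]
    · show (trip b0 b1 β θ).1 + (trip b0 b1 β θ).2.1 + (trip b0 b1 β θ).2.2 = -b
      ext i
      have hadd : ∀ (u v w : EuclideanSpace ℝ (Fin 2)) (j : Fin 2),
          (u + v + w) j = u j + v j + w j := fun _ _ _ _ => rfl
      have hneg : ∀ (j : Fin 2), (-b) j = -(b j) := fun _ => rfl
      rw [hadd, hneg]
      fin_cases i
      · show (C0 b0 b1 β θ/2 - Tt β θ * C1 b0 b1 β θ / Rr β θ) +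
          (C0 b0 b1 β θ/2 + Tt β θ * C1 b0 b1 β θ / Rr β θ) +
          ((-(Real.cos θ) * b0 - Real.sin θ * b1)/β) = -b0
        rw [C0]; field_simp; ring
      · show (C1 b0 b1 β θ/2 + Tt β θ * C0 b0 b1 β θ / Rr β θ) +
          (C1 b0 b1 β θ/2 - Tt β θ * C0 b0 b1 β θ / Rr β θ) +
          ((-(Real.cos θ) * b1 + Real.sin θ * b0)/β) = -b1
        rw [C1]; field_simp; ring
  have hinj : Set.InjOn (trip b0 b1 β) (Set.Ioc 0 1) := by
    intro θ hθ θ' hθ' heq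
    have h3 : (trip b0 b1 β θ).2.2 0 = (trip b0 b1 β θ').2.2 0 := by rw [heq]
    have h4 : (trip b0 b1 β θ).2.2 1 = (trip b0 b1 β θ').2.2 1 := by rw [heq]
    rw [trip, trip] at h3 h4
    simp only [V2_zero, V2_one] at h3 h4
    rw [div_eq_div_iff hβ0 hβ0] at h3 h4
    have h3' := mul_right_cancel₀ hβ0 h3
    have h4' := mul_right_cancel₀ hβ0 h4
    have hsin : Real.sin θ = Real.sin θ' := by
      have hβ2pos : (0:ℝ) < b0^2 + b1^2 := by rw [hb2]; positivity
      have hkey : Real.sin θ * (b0^2 + b1^2) = Real.sin θ' * (b0^2 + b1^2) := by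
        linear_combination b0 * h4' - b1 * h3'
      exact mul_right_cancel₀ (ne_of_gt hβ2pos) hkey
    have hpi : (1:ℝ) ≤ Real.pi/2 := by nlinarith [Real.pi_gt_three]
    apply Real.injOn_sin _ _ hsin
    · exact ⟨by linarith [hθ.1], by linarith [hθ.2]⟩
    · exact ⟨by linarith [hθ'.1], by linarith [hθ'.2]⟩
  have hcnt : (Set.Ioc (0:ℝ) 1).Countable := hmaps.countable_of_injOn hinj hS
  have := hcnt.to_subtype
  have hmk : (Cardinal.mk (Set.Ioc (0:ℝ) 1)) ≤ Cardinal.aleph0 := Cardinal.mk_le_aleph0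
  rw [Cardinal.mk_Ioc_real (by norm_num : (0:ℝ) < 1)] at hmk
  exact absurd hmk (not_le.mpr Cardinal.aleph0_lt_continuum)
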